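/- arXiv:2310.15034 — 2 statements merged into one kernel-verified Lean document; each statement's English description precedes it below -/
import Mathlib

section
/- Let Φ be a Bernstein function with tail Lévy measure Π̄, and let φ : [0,∞) → ℝ be continuously differentiable with φ and φ′ of exponential order w (|φ(t)|, |φ′(t)| ≤ M e^{wt}). Define the Caputo–Dzherbashian-type derivative 𝔇^Φ φ(t) = ∫₀^t φ′(s) Π̄(t−s) ds. Then for all λ > w, ∫₀^∞ e^{−λt} 𝔇^Φ φ(t) dt = Φ(λ) φ̃(λ) − (Φ(λ)/λ) φ(0), where φ̃ is the Laplace transform of φ. -/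
open MeasureTheory Set Convolution
open scoped ENNReal

section CDaux

lemma lev_meas (Lev : Measure ℝ) : Measurable (fun u : ℝ => (Lev (Ioi u)).toReal) :=
  ENNReal.measurable_toReal.comp <|
    Antitone.measurable fun _ _ hst => measure_mono (Ioi_subset_Ioi hst)

lemma lev_fin (Lev : Measure ℝ)
    (hLev : IntegrableOn (fun z => min 1 z) (Ioi 0) Lev) {u : ℝ} (hu : 0 < u) :
    Lev (Ioi u) < ⊤ := by
  have hsub : Ioi u ⊆ Ioi 0 := Ioi_subset_Ioi hu.le
  have hfin : ∫⁻ z in Ioi u, ENNReal.ofReal (min 1 z) ∂Lev < ⊤ := by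
    refine lt_of_le_of_lt (lintegral_mono_set hsub) ?_
    have this := hLev.2
    unfold HasFiniteIntegral at this
    refine lt_of_le_of_lt (lintegral_mono_ae ?_) this
    filter_upwards [ae_restrict_mem measurableSet_Ioi] with z hz
    rw [← Real.enorm_eq_ofReal (le_min zero_le_one (le_of_lt hz))]
  have hbd : ENNReal.ofReal (min 1 u) * Lev (Ioi u) ≤ ∫⁻ z in Ioi u, ENNReal.ofReal (min 1 z) ∂Lev := by
    rw [← setLIntegral_const]
    refine setLIntegral_mono (by fun_prop) fun z hz => ?_
    exact ENNReal.ofReal_le_ofReal (min_le_min le_rfl (le_of_lt hz))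
  have hne : ENNReal.ofReal (min 1 u) ≠ 0 := by
    simp [ENNReal.ofReal_eq_zero, not_le, lt_min_iff, hu]
  have := lt_of_le_of_lt hbd hfin
  rcases eq_top_or_lt_top (Lev (Ioi u)) with h | h
  · rw [h, ENNReal.mul_top hne] at this; exact absurd this (by simp)
  · exact h

/-- FTC step: `∫ u in Ioo 0 z, l e^{-lu} du = 1 - e^{-lz}` as a lintegral identity. -/
lemma inner_ftc {l : ℝ} (hl : 0 < l) {z : ℝ} (hz : 0 < z) :
    ∫⁻ u in Ioo (0:ℝ) z, ENNReal.ofReal (l * Real.exp (-(l * u))) =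
      ENNReal.ofReal (1 - Real.exp (-(l * z))) := by
  have hcont : Continuous fun u : ℝ => l * Real.exp (-(l * u)) := by continuity
  have hInt : IntegrableOn (fun u : ℝ => l * Real.exp (-(l * u))) (Ioo 0 z) :=
    (hcont.integrableOn_Icc).mono_set Ioo_subset_Icc_self
  rw [← ofReal_integral_eq_lintegral_ofReal hInt]
  · congr 1
    have hae : (volume : Measure ℝ).restrict (Ioo 0 z) = volume.restrict (Ioc 0 z) :=
      Measure.restrict_congr_set Ioo_ae_eq_Ioc
    rw [show (∫ u in Ioo (0:ℝ) z, l * Real.exp (-(l * u))) =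
        ∫ u in Ioc (0:ℝ) z, l * Real.exp (-(l * u)) by rw [hae]]
    rw [← intervalIntegral.integral_of_le hz.le]
    have : ∀ u ∈ uIcc (0:ℝ) z, HasDerivAt (fun u : ℝ => -Real.exp (-(l * u)))
        (l * Real.exp (-(l * u))) u := by
      intro u _
      have h1 : HasDerivAt (fun u : ℝ => -(l * u)) (-l) u := by
        simpa using (hasDerivAt_neg u).const_mul l
      have := (Real.hasDerivAt_exp (-(l * u))).comp u h1
      exact this.neg.congr_deriv (by ring)
    rw [intervalIntegral.integral_eq_sub_of_hasDerivAt this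
        (hcont.intervalIntegrable 0 z)]
    simp [Real.exp_zero]
    ring
  · filter_upwards [ae_restrict_mem measurableSet_Ioo] with u _
    positivity

/-- Key Tonelli identity. -/
lemma key_tonelli (Lev : Measure ℝ) (hsf : SigmaFinite (Lev.restrict (Ioi 0))) {l : ℝ} (hl : 0 < l) :
    ∫⁻ z in Ioi (0:ℝ), ENNReal.ofReal (1 - Real.exp (-(l * z))) ∂Lev =
      ∫⁻ u in Ioi (0:ℝ), ENNReal.ofReal (l * Real.exp (-(l * u))) * Lev (Ioi u) := by
  haveI := hsf
  set f : ℝ → ℝ≥0∞ := fun u => ENNReal.ofReal (l * Real.exp (-(l * u))) with hf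
  have hfmeas : Measurable f := by fun_prop
  calc ∫⁻ z in Ioi (0:ℝ), ENNReal.ofReal (1 - Real.exp (-(l * z))) ∂Lev
      = ∫⁻ z in Ioi (0:ℝ), (∫⁻ u in Ioi (0:ℝ), {p : ℝ × ℝ | p.2 < p.1}.indicator
          (fun p => f p.2) (z, u)) ∂Lev := by
        refine setLIntegral_congr_fun measurableSet_Ioi (fun z hz => ?_)
        rw [← inner_ftc hl hz]
        have : ∀ u : ℝ, {p : ℝ × ℝ | p.2 < p.1}.indicator (fun p => f p.2) (z, u)
            = (Iio z).indicator f u := by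
          intro u
          by_cases h : u < z <;> simp [Set.indicator_apply, h]
        simp_rw [this]
        rw [lintegral_indicator measurableSet_Iio, Measure.restrict_restrict measurableSet_Iio]
        congr 1
        rw [Iio_inter_Ioi]
    _ = ∫⁻ u in Ioi (0:ℝ), ∫⁻ z in Ioi (0:ℝ), {p : ℝ × ℝ | p.2 < p.1}.indicator
          (fun p => f p.2) (z, u) ∂Lev := by
        refine lintegral_lintegral_swap ?_
        refine (Measurable.indicator (hfmeas.comp measurable_snd) ?_).aemeasurable
        exact measurableSet_lt measurable_snd measurable_fst
    _ = ∫⁻ u in Ioi (0:ℝ), f u * Lev (Ioi u) := by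
        refine setLIntegral_congr_fun measurableSet_Ioi (fun u hu => ?_)
        have : ∀ z : ℝ, {p : ℝ × ℝ | p.2 < p.1}.indicator (fun p => f p.2) (z, u)
            = (Ioi u).indicator (fun _ => f u) z := by
          intro z
          by_cases h : u < z <;> simp [Set.indicator_apply, h]
        simp_rw [this]
        rw [lintegral_indicator measurableSet_Ioi, Measure.restrict_restrict measurableSet_Ioi,
          setLIntegral_const]
        congr 1
        rw [inter_eq_left.mpr (Ioi_subset_Ioi hu.le)]

lemma sf_restrict (Lev : Measure ℝ)
    (hLev : IntegrableOn (fun z => min 1 z) (Ioi 0) Lev) :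
    SigmaFinite (Lev.restrict (Ioi 0)) := by
  refine Measure.sigmaFinite_of_countable
    (S := insert (Iic 0) (range fun n : ℕ => Ioi (1 / (n + 1) : ℝ))) ?_ ?_ ?_
  · exact (countable_range _).insert _
  · rintro s (rfl | ⟨n, rfl⟩)
    · rw [Measure.restrict_apply measurableSet_Iic, Iic_inter_Ioi, Ioc_self]
      simp
    · rw [Measure.restrict_apply measurableSet_Ioi]
      have hpos : (0:ℝ) < 1 / (n + 1) := by positivity
      calc Lev (Ioi (1 / (n + 1) : ℝ) ∩ Ioi 0) ≤ Lev (Ioi (1 / (n + 1) : ℝ)) :=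
            measure_mono inter_subset_left
        _ < ⊤ := lev_fin Lev hLev hpos
  · apply eq_univ_of_forall
    intro x
    rcases le_or_gt x 0 with hx | hx
    · exact mem_sUnion.mpr ⟨Iic 0, mem_insert _ _, hx⟩
    · obtain ⟨n, hn⟩ := exists_nat_one_div_lt hx
      exact mem_sUnion.mpr ⟨Ioi (1 / (n + 1) : ℝ), mem_insert_of_mem _ ⟨n, rfl⟩, hn⟩

lemma min_fin (Lev : Measure ℝ)
    (hLev : IntegrableOn (fun z => min 1 z) (Ioi 0) Lev) :
    ∫⁻ z in Ioi (0:ℝ), ENNReal.ofReal (min 1 z) ∂Lev < ⊤ := by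
  have this := hLev.2
  unfold HasFiniteIntegral at this
  refine lt_of_le_of_lt (lintegral_mono_ae ?_) this
  filter_upwards [ae_restrict_mem measurableSet_Ioi] with z hz
  rw [← Real.enorm_eq_ofReal (le_min zero_le_one (le_of_lt hz))]

lemma one_sub_exp_le {l z : ℝ} (hl : 0 < l) (hz : 0 < z) :
    1 - Real.exp (-(l * z)) ≤ max 1 l * min 1 z := by
  have h1 : 1 - Real.exp (-(l * z)) ≤ 1 := by
    have := Real.exp_pos (-(l * z)); linarith
  have h2 : 1 - Real.exp (-(l * z)) ≤ l * z := by
    have := Real.add_one_le_exp (-(l * z)); linarith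
  rcases le_total 1 z with h | h
  · rw [min_eq_left h]
    calc 1 - Real.exp (-(l * z)) ≤ 1 := h1
      _ ≤ max 1 l * 1 := by simp
  · rw [min_eq_right h]
    calc 1 - Real.exp (-(l * z)) ≤ l * z := h2
      _ ≤ max 1 l * z := by nlinarith [le_max_right (1:ℝ) l]

lemma fin_phi (Lev : Measure ℝ)
    (hLev : IntegrableOn (fun z => min 1 z) (Ioi 0) Lev) {l : ℝ} (hl : 0 < l) :
    ∫⁻ z in Ioi (0:ℝ), ENNReal.ofReal (1 - Real.exp (-(l * z))) ∂Lev < ⊤ := by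
  have hb : ∫⁻ z in Ioi (0:ℝ), ENNReal.ofReal (1 - Real.exp (-(l * z))) ∂Lev
      ≤ ∫⁻ z in Ioi (0:ℝ), ENNReal.ofReal (max 1 l) * ENNReal.ofReal (min 1 z) ∂Lev := by
    refine lintegral_mono_ae ?_
    filter_upwards [ae_restrict_mem measurableSet_Ioi] with z hz
    rw [← ENNReal.ofReal_mul (le_max_of_le_left zero_le_one)]
    exact ENNReal.ofReal_le_ofReal (one_sub_exp_le hl hz)
  rw [lintegral_const_mul' _ _ ENNReal.ofReal_ne_top] at hb
  exact lt_of_le_of_lt hb (ENNReal.mul_lt_top ENNReal.ofReal_lt_top (min_fin Lev hLev))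

/-- The tail Laplace integrand is integrable on `(0,∞)`. -/
lemma G_integrable (Lev : Measure ℝ)
    (hLev : IntegrableOn (fun z => min 1 z) (Ioi 0) Lev) {l : ℝ} (hl : 0 < l) :
    IntegrableOn (fun u => Real.exp (-(l * u)) * (Lev (Ioi u)).toReal) (Ioi 0) := by
  haveI := sf_restrict Lev hLev
  constructor
  · exact (((Real.continuous_exp.comp (by continuity)).measurable).mul
      (lev_meas Lev)).aestronglyMeasurable
  · unfold HasFiniteIntegral
    have hae : ∫⁻ u in Ioi (0:ℝ), ‖Real.exp (-(l * u)) * (Lev (Ioi u)).toReal‖ₑ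
        = ∫⁻ u in Ioi (0:ℝ), ENNReal.ofReal (Real.exp (-(l * u))) * Lev (Ioi u) := by
      refine lintegral_congr_ae ?_
      filter_upwards [ae_restrict_mem measurableSet_Ioi] with u hu
      rw [Real.enorm_eq_ofReal (by positivity),
        ENNReal.ofReal_mul (Real.exp_pos _).le,
        ENNReal.ofReal_toReal (lev_fin Lev hLev hu).ne]
    rw [hae]
    have hkey := key_tonelli Lev (sf_restrict Lev hLev) (hl := hl)
    have heq : ∫⁻ u in Ioi (0:ℝ), ENNReal.ofReal (l * Real.exp (-(l * u))) * Lev (Ioi u)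
        = ENNReal.ofReal l * ∫⁻ u in Ioi (0:ℝ), ENNReal.ofReal (Real.exp (-(l * u))) * Lev (Ioi u) := by
      rw [← lintegral_const_mul' _ _ ENNReal.ofReal_ne_top]
      congr 1; ext u
      rw [ENNReal.ofReal_mul hl.le, mul_assoc]
    have hfin : ENNReal.ofReal l * ∫⁻ u in Ioi (0:ℝ),
        ENNReal.ofReal (Real.exp (-(l * u))) * Lev (Ioi u) < ⊤ := by
      rw [← heq, ← hkey]; exact fin_phi Lev hLev hl
    have hlne : ENNReal.ofReal l ≠ 0 := by simp [ENNReal.ofReal_eq_zero, not_le, hl]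
    rcases eq_top_or_lt_top (∫⁻ u in Ioi (0:ℝ),
        ENNReal.ofReal (Real.exp (-(l * u))) * Lev (Ioi u)) with h | h
    · rw [h, ENNReal.mul_top hlne] at hfin; exact absurd hfin (lt_irrefl ⊤)
    · exact h

lemma exp_bound_integrable {g : ℝ → ℝ} {M w l : ℝ} (hw : 0 ≤ w) (hl : w < l)
    (hmeas : AEStronglyMeasurable g (volume.restrict (Ioi 0)))
    (hbd : ∀ t ≥ (0:ℝ), |g t| ≤ M * Real.exp (w * t)) :
    IntegrableOn (fun t => Real.exp (-(l * t)) * g t) (Ioi 0) := by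
  have hdom : IntegrableOn (fun t => M * Real.exp (-(l - w) * t)) (Ioi 0) :=
    (exp_neg_integrableOn_Ioi 0 (by linarith)).const_mul M
  refine Integrable.mono hdom ?_ ?_
  · exact ((Real.continuous_exp.comp (by continuity)).aestronglyMeasurable).mul hmeas
  · filter_upwards [ae_restrict_mem measurableSet_Ioi] with t ht
    have h1 : |g t| ≤ M * Real.exp (w * t) := hbd t ht.le
    have hM0 : 0 ≤ M := by
      have := (abs_nonneg (g t)).trans h1
      nlinarith [Real.exp_pos (w * t)]
    rw [Real.norm_eq_abs, Real.norm_eq_abs, abs_mul, Real.abs_exp]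
    rw [abs_of_nonneg (by positivity : (0:ℝ) ≤ M * Real.exp (-(l - w) * t))]
    calc Real.exp (-(l * t)) * |g t| ≤ Real.exp (-(l * t)) * (M * Real.exp (w * t)) := by
          exact mul_le_mul_of_nonneg_left h1 (Real.exp_pos _).le
      _ = M * Real.exp (-(l - w) * t) := by
          rw [← mul_assoc, mul_comm (Real.exp _) M, mul_assoc, ← Real.exp_add]
          ring_nf

lemma by_parts {φ : ℝ → ℝ} {M w : ℝ} (hw : 0 ≤ w)
    (hφdiff : Differentiable ℝ φ)
    (hφbd : ∀ t ≥ (0:ℝ), |φ t| ≤ M * Real.exp (w * t))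
    (hφ'bd : ∀ t ≥ (0:ℝ), |deriv φ t| ≤ M * Real.exp (w * t))
    {l : ℝ} (hl : w < l) :
    (∫ t in Ioi (0:ℝ), Real.exp (-(l * t)) * deriv φ t) =
      l * (∫ t in Ioi (0:ℝ), Real.exp (-(l * t)) * φ t) - φ 0 := by
  have hl0 : 0 < l := lt_of_le_of_lt hw hl
  have hint1 : IntegrableOn (fun t => Real.exp (-(l * t)) * deriv φ t) (Ioi 0) :=
    exp_bound_integrable hw hl (measurable_deriv φ).aestronglyMeasurable.restrict hφ'bd
  have hint2 : IntegrableOn (fun t => Real.exp (-(l * t)) * φ t) (Ioi 0) :=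
    exp_bound_integrable hw hl hφdiff.continuous.aestronglyMeasurable.restrict hφbd
  have hderiv : ∀ x ∈ Ici (0:ℝ), HasDerivAt (fun t => Real.exp (-(l * t)) * φ t)
      (Real.exp (-(l * x)) * deriv φ x - l * (Real.exp (-(l * x)) * φ x)) x := by
    intro x _
    have h1 : HasDerivAt (fun t : ℝ => Real.exp (-(l * t))) (-l * Real.exp (-(l * x))) x := by
      have h0 : HasDerivAt (fun t : ℝ => -(l * t)) (-l) x := by
        simpa using (hasDerivAt_neg x).const_mul l
      simpa [mul_comm, Function.comp_def] using (Real.hasDerivAt_exp (-(l * x))).comp x h0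
    have := h1.mul (hφdiff x).hasDerivAt
    exact this.congr_deriv (by ring)
  have hfint : IntegrableOn (fun x => Real.exp (-(l * x)) * deriv φ x
      - l * (Real.exp (-(l * x)) * φ x)) (Ioi 0) :=
    hint1.sub (hint2.const_mul l)
  have htend : Filter.Tendsto (fun t => Real.exp (-(l * t)) * φ t) Filter.atTop (nhds 0) := by
    have hg : Filter.Tendsto (fun t : ℝ => M * Real.exp (-(l - w) * t)) Filter.atTop (nhds 0) := by
      have h1 : Filter.Tendsto (fun t : ℝ => (l - w) * t) Filter.atTop Filter.atTop :=
        Filter.Tendsto.const_mul_atTop (by linarith) Filter.tendsto_id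
      have h2 := Real.tendsto_exp_neg_atTop_nhds_zero.comp h1
      have := h2.const_mul M
      simpa [Function.comp, ← neg_mul, neg_sub] using this
    refine squeeze_zero_norm' ?_ hg
    filter_upwards [Filter.Ioi_mem_atTop 0] with t ht
    have h1 : |φ t| ≤ M * Real.exp (w * t) := hφbd t (le_of_lt ht)
    rw [Real.norm_eq_abs, abs_mul, Real.abs_exp]
    calc Real.exp (-(l * t)) * |φ t| ≤ Real.exp (-(l * t)) * (M * Real.exp (w * t)) :=
          mul_le_mul_of_nonneg_left h1 (Real.exp_pos _).le
      _ = M * Real.exp (-(l - w) * t) := by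
          rw [← mul_assoc, mul_comm (Real.exp _) M, mul_assoc, ← Real.exp_add]
          ring_nf
  have hFTC := integral_Ioi_of_hasDerivAt_of_tendsto' hderiv hfint htend
  rw [integral_sub hint1 (hint2.const_mul l), integral_const_mul] at hFTC
  simp only [Real.exp_zero, mul_zero, neg_zero, one_mul, zero_sub] at hFTC
  linarith [hFTC]

lemma phi_integrand_nonneg {l z : ℝ} (hl : 0 < l) (hz : 0 < z) :
    0 ≤ 1 - Real.exp (-(l * z)) := by
  have : Real.exp (-(l * z)) ≤ 1 := Real.exp_le_one_iff.mpr (by nlinarith)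
  linarith

lemma phi_integrable (Lev : Measure ℝ)
    (hLev : IntegrableOn (fun z => min 1 z) (Ioi 0) Lev) {l : ℝ} (hl : 0 < l) :
    IntegrableOn (fun z => 1 - Real.exp (-(l * z))) (Ioi 0) Lev := by
  constructor
  · exact (Continuous.aestronglyMeasurable (by continuity)).restrict
  · unfold HasFiniteIntegral
    refine lt_of_le_of_lt (le_of_eq (lintegral_congr_ae ?_)) (fin_phi Lev hLev hl)
    filter_upwards [ae_restrict_mem measurableSet_Ioi] with z hz
    rw [Real.enorm_eq_ofReal (phi_integrand_nonneg hl hz)]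

lemma step_A (Lev : Measure ℝ)
    (hLev : IntegrableOn (fun z => min 1 z) (Ioi 0) Lev) {l : ℝ} (hl : 0 < l) :
    (∫ z in Ioi (0:ℝ), (1 - Real.exp (-(l * z))) ∂Lev) =
      l * ∫ u in Ioi (0:ℝ), Real.exp (-(l * u)) * (Lev (Ioi u)).toReal := by
  set I : ℝ := ∫ u in Ioi (0:ℝ), Real.exp (-(l * u)) * (Lev (Ioi u)).toReal with hI
  have hInn : 0 ≤ I := setIntegral_nonneg measurableSet_Ioi fun u _ => by positivity
  have hLnn : 0 ≤ ∫ z in Ioi (0:ℝ), (1 - Real.exp (-(l * z))) ∂Lev := by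
    refine setIntegral_nonneg measurableSet_Ioi fun z hz => phi_integrand_nonneg hl hz
  have h1 : ENNReal.ofReal (∫ z in Ioi (0:ℝ), (1 - Real.exp (-(l * z))) ∂Lev)
      = ∫⁻ z in Ioi (0:ℝ), ENNReal.ofReal (1 - Real.exp (-(l * z))) ∂Lev := by
    refine ofReal_integral_eq_lintegral_ofReal (phi_integrable Lev hLev hl) ?_
    filter_upwards [ae_restrict_mem measurableSet_Ioi] with z hz
    exact phi_integrand_nonneg hl hz
  have h2 : ENNReal.ofReal I = ∫⁻ u in Ioi (0:ℝ),
      ENNReal.ofReal (Real.exp (-(l * u))) * Lev (Ioi u) := by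
    rw [hI, ofReal_integral_eq_lintegral_ofReal (G_integrable Lev hLev hl)
      (ae_of_all _ fun u => by positivity)]
    refine lintegral_congr_ae ?_
    filter_upwards [ae_restrict_mem measurableSet_Ioi] with u hu
    rw [ENNReal.ofReal_mul (Real.exp_pos _).le,
      ENNReal.ofReal_toReal (lev_fin Lev hLev hu).ne]
  have hkey := key_tonelli Lev (sf_restrict Lev hLev) (hl := hl)
  have h3 : ∫⁻ u in Ioi (0:ℝ), ENNReal.ofReal (l * Real.exp (-(l * u))) * Lev (Ioi u)
      = ENNReal.ofReal l * ∫⁻ u in Ioi (0:ℝ),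
        ENNReal.ofReal (Real.exp (-(l * u))) * Lev (Ioi u) := by
    rw [← lintegral_const_mul' _ _ ENNReal.ofReal_ne_top]
    congr 1; ext u
    rw [ENNReal.ofReal_mul hl.le, mul_assoc]
  have : ENNReal.ofReal (∫ z in Ioi (0:ℝ), (1 - Real.exp (-(l * z))) ∂Lev)
      = ENNReal.ofReal (l * I) := by
    rw [h1, hkey, h3, ← h2, ← ENNReal.ofReal_mul hl.le]
  rw [ENNReal.ofReal_eq_ofReal_iff hLnn (by positivity)] at this
  exact this

end CDaux

/-- Laplace transform of the Caputo–Dzherbashian-type derivative: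
`∫₀^∞ e^{−λt} 𝔇^Φ φ(t) dt = Φ(λ) φ̃(λ) − (Φ(λ)/λ) φ(0)` for `λ > w`. -/
theorem laplace_caputo_dzherbashian
    (Lev : Measure ℝ)
    (hLev : IntegrableOn (fun z => min 1 z) (Ioi 0) Lev)
    (Φ : ℝ → ℝ)
    (hΦ : ∀ l > (0:ℝ), Φ l = ∫ z in Ioi (0:ℝ), (1 - Real.exp (-(l * z))) ∂Lev)
    (φ : ℝ → ℝ) (M w : ℝ) (hw : 0 ≤ w) (hM : 0 < M)
    (hφdiff : Differentiable ℝ φ)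
    (hφbd : ∀ t ≥ (0:ℝ), |φ t| ≤ M * Real.exp (w * t))
    (hφ'bd : ∀ t ≥ (0:ℝ), |deriv φ t| ≤ M * Real.exp (w * t))
    (l : ℝ) (hl : w < l) :
    ∫ t in Ioi (0:ℝ), Real.exp (-(l * t)) *
        (∫ s in (0:ℝ)..t, deriv φ s * (Lev (Ioi (t - s))).toReal) =
      Φ l * (∫ t in Ioi (0:ℝ), Real.exp (-(l * t)) * φ t) - (Φ l / l) * φ 0 := by
  have hl0 : 0 < l := lt_of_le_of_lt hw hl
  set F : ℝ → ℝ := (Ioi 0).indicator (fun s => Real.exp (-(l * s)) * deriv φ s) with hFdef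
  set G : ℝ → ℝ := (Ioi 0).indicator
    (fun u => Real.exp (-(l * u)) * (Lev (Ioi u)).toReal) with hGdef
  have hF : Integrable F := (integrable_indicator_iff measurableSet_Ioi).mpr
    (exp_bound_integrable hw hl (measurable_deriv φ).aestronglyMeasurable.restrict hφ'bd)
  have hG : Integrable G := (integrable_indicator_iff measurableSet_Ioi).mpr
    (G_integrable Lev hLev hl0)
  -- pointwise identification of the convolution
  have hpt : ∀ x : ℝ, (F ⋆[ContinuousLinearMap.lsmul ℝ ℝ] G) x =
      (Ioi 0).indicator (fun x => Real.exp (-(l * x)) *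
        (∫ s in (0:ℝ)..x, deriv φ s * (Lev (Ioi (x - s))).toReal)) x := by
    intro x
    have hptfun : ∀ s : ℝ, F s * G (x - s) =
        (Ioo 0 x).indicator (fun s => Real.exp (-(l * x)) *
          (deriv φ s * (Lev (Ioi (x - s))).toReal)) s := by
      intro s
      by_cases hs : s ∈ Ioi (0:ℝ)
      · by_cases hxs : x - s ∈ Ioi (0:ℝ)
        · have hmem : s ∈ Ioo (0:ℝ) x := ⟨hs, by have := hxs.out; linarith⟩
          rw [hFdef, hGdef, Set.indicator_of_mem hs, Set.indicator_of_mem hxs,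
            Set.indicator_of_mem hmem]
          have he : Real.exp (-(l * s)) * Real.exp (-(l * (x - s))) = Real.exp (-(l * x)) := by
            rw [← Real.exp_add]; congr 1; ring
          calc Real.exp (-(l * s)) * deriv φ s *
                (Real.exp (-(l * (x - s))) * (Lev (Ioi (x - s))).toReal)
              = Real.exp (-(l * s)) * Real.exp (-(l * (x - s))) *
                (deriv φ s * (Lev (Ioi (x - s))).toReal) := by ring
            _ = Real.exp (-(l * x)) * (deriv φ s * (Lev (Ioi (x - s))).toReal) := by rw [he]
        · have hnm : s ∉ Ioo (0:ℝ) x := by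
            intro hmem
            exact hxs (by simp only [mem_Ioi]; linarith [hmem.2])
          rw [hGdef, Set.indicator_of_notMem hxs, Set.indicator_of_notMem hnm, mul_zero]
      · have hnm : s ∉ Ioo (0:ℝ) x := fun hmem => hs hmem.1
        rw [hFdef, Set.indicator_of_notMem hs, Set.indicator_of_notMem hnm, zero_mul]
    have hconvx : (F ⋆[ContinuousLinearMap.lsmul ℝ ℝ] G) x =
        ∫ s in Ioo (0:ℝ) x, Real.exp (-(l * x)) *
          (deriv φ s * (Lev (Ioi (x - s))).toReal) := by
      show (∫ s, F s * G (x - s)) = _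
      rw [show (fun s => F s * G (x - s)) = (Ioo 0 x).indicator
        (fun s => Real.exp (-(l * x)) * (deriv φ s * (Lev (Ioi (x - s))).toReal)) from
        funext hptfun]
      exact integral_indicator measurableSet_Ioo
    by_cases hx : x ∈ Ioi (0:ℝ)
    · rw [hconvx, Set.indicator_of_mem hx]
      rw [intervalIntegral.integral_of_le hx.out.le]
      rw [show ((volume : Measure ℝ).restrict (Ioc 0 x)) = volume.restrict (Ioo 0 x) from
        (Measure.restrict_congr_set Ioo_ae_eq_Ioc).symm]
      rw [← integral_const_mul]
    · rw [hconvx, Set.indicator_of_notMem hx]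
      have : Ioo (0:ℝ) x = ∅ := Ioo_eq_empty (by simpa using hx)
      rw [this]
      simp
  -- the total integral of the convolution
  have htot := integral_convolution (ContinuousLinearMap.lsmul ℝ ℝ) hF hG
  have hLHS : ∫ t in Ioi (0:ℝ), Real.exp (-(l * t)) *
      (∫ s in (0:ℝ)..t, deriv φ s * (Lev (Ioi (t - s))).toReal) =
      ∫ x, (F ⋆[ContinuousLinearMap.lsmul ℝ ℝ] G) x := by
    rw [show (fun x => (F ⋆[ContinuousLinearMap.lsmul ℝ ℝ] G) x) =
      (Ioi 0).indicator (fun x => Real.exp (-(l * x)) *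
        (∫ s in (0:ℝ)..x, deriv φ s * (Lev (Ioi (x - s))).toReal)) from funext hpt]
    rw [integral_indicator measurableSet_Ioi]
  have hFi : ∫ x, F x = l * (∫ t in Ioi (0:ℝ), Real.exp (-(l * t)) * φ t) - φ 0 := by
    rw [hFdef, integral_indicator measurableSet_Ioi]
    exact by_parts hw hφdiff hφbd hφ'bd hl
  have hGi : ∫ x, G x = Φ l / l := by
    rw [hGdef, integral_indicator measurableSet_Ioi]
    have := step_A Lev hLev hl0
    rw [← hΦ l hl0] at this
    field_simp
    linarith [this]
  rw [hLHS, htot, hFi, hGi]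
  show (l * (∫ t in Ioi (0:ℝ), Real.exp (-(l * t)) * φ t) - φ 0) • (Φ l / l) = _
  rw [smul_eq_mul]
  field_simp
end

section
/- For λ > 0 and x > 0, ∫₀^∞ e^{−λt} (x/t) g(t,x) dt = e^{−x√λ}, where g(t,x) = e^{−x²/(4t)}/√(4πt). -/
open MeasureTheory Set Real

lemma odd_part_integrable (c : ℝ) (hc : 0 < c) :
    Integrable (fun v : ℝ => Real.exp (-v ^ 2) * (v / Real.sqrt (v ^ 2 + c))) := by
  have hint : Integrable (fun v : ℝ => Real.exp (-(1:ℝ) * v ^ 2)) :=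
    integrable_exp_neg_mul_sq one_pos
  refine hint.mono ?_ ?_
  · apply Continuous.aestronglyMeasurable
    apply Continuous.mul (by continuity)
    apply Continuous.div continuous_id (by continuity)
    intro v
    have : 0 < v ^ 2 + c := by positivity
    exact (Real.sqrt_pos.2 this).ne'
  · filter_upwards with v
    have h1 : |v| ≤ Real.sqrt (v ^ 2 + c) := by
      rw [← Real.sqrt_sq_eq_abs]
      exact Real.sqrt_le_sqrt (by linarith)
    have h2 : 0 < Real.sqrt (v ^ 2 + c) :=
      Real.sqrt_pos.2 (by positivity)
    rw [Real.norm_eq_abs, Real.norm_eq_abs, abs_mul, Real.abs_exp, abs_div,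
      abs_of_pos h2]
    have : |v| / Real.sqrt (v ^ 2 + c) ≤ 1 := by
      rw [div_le_one h2]; exact h1
    calc Real.exp (-v ^ 2) * (|v| / Real.sqrt (v ^ 2 + c))
        ≤ Real.exp (-v ^ 2) * 1 := by
          exact mul_le_mul_of_nonneg_left this (Real.exp_nonneg _)
      _ = |Real.exp (-(1:ℝ) * v ^ 2)| := by
          rw [Real.abs_exp, mul_one, neg_one_mul]

lemma odd_part_zero (c : ℝ) (hc : 0 < c) :
    ∫ v : ℝ, Real.exp (-v ^ 2) * (v / Real.sqrt (v ^ 2 + c)) = 0 := by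
  set f : ℝ → ℝ := fun v => Real.exp (-v ^ 2) * (v / Real.sqrt (v ^ 2 + c)) with hf
  have hodd : ∀ v, f (-v) = -f v := by
    intro v; simp only [hf]; rw [neg_pow]; ring_nf
  have : ∫ v, f v = ∫ v, f (-v) := (integral_neg_eq_self f volume).symm
  have h2 : ∫ v, f (-v) = -∫ v, f v := by
    simp_rw [hodd]; exact integral_neg f
  linarith [this, h2]

/-- Laplace transform of the first-passage density `(x/t) g(t,x)`. -/
theorem laplace_hitting_density (l x : ℝ) (hl : 0 < l) (hx : 0 < x) :
    ∫ t in Ioi (0:ℝ),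
      Real.exp (-(l * t)) * ((x / t) * (Real.exp (-(x ^ 2 / (4 * t))) / Real.sqrt (4 * π * t))) =
      Real.exp (-(x * Real.sqrt l)) := by
  set a := Real.sqrt l with ha_def
  have ha : 0 < a := Real.sqrt_pos.2 hl
  have ha2 : a ^ 2 = l := Real.sq_sqrt hl.le
  set φ : ℝ → ℝ := fun t => x / (2 * Real.sqrt t) - a * Real.sqrt t with hφ
  set φ' : ℝ → ℝ := fun t => -(x / (4 * t * Real.sqrt t) + a / (2 * Real.sqrt t)) with hφ'
  set G : ℝ → ℝ := fun v =>
    Real.exp (-(x * a)) * Real.exp (-v ^ 2) * ((1 / Real.sqrt π) *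
      (1 + v / Real.sqrt (v ^ 2 + 2 * (x * a)))) with hG
  -- derivative of φ on Ioi 0
  have hderiv : ∀ t ∈ Ioi (0:ℝ), HasDerivAt φ (φ' t) t := by
    intro t ht
    have ht0 : (0:ℝ) < t := ht
    have hst : 0 < Real.sqrt t := Real.sqrt_pos.2 ht0
    have h1 : HasDerivAt Real.sqrt (1 / (2 * Real.sqrt t)) t :=
      Real.hasDerivAt_sqrt ht0.ne'
    have h2 : HasDerivAt (fun t => x / (2 * Real.sqrt t))
        (-(x / (4 * t * Real.sqrt t))) t := by
      have h4 := (h1.inv hst.ne').const_mul (x / 2)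
      have hfun : (fun t : ℝ => x / (2 * Real.sqrt t)) = fun t => x / 2 * (Real.sqrt t)⁻¹ := by
        funext u; ring
      rw [hfun]
      refine h4.congr_deriv ?_
      rw [Real.sq_sqrt ht0.le]
      field_simp
      norm_num
    have h5 : HasDerivAt (fun t => a * Real.sqrt t) (a * (1 / (2 * Real.sqrt t))) t :=
      h1.const_mul a
    have := h2.sub h5
    refine this.congr_deriv ?_
    simp only [hφ']
    field_simp
    ring
  have hderivWithin : ∀ t ∈ Ioi (0:ℝ), HasDerivWithinAt φ (φ' t) (Ioi 0) t :=
    fun t ht => (hderiv t ht).hasDerivWithinAt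
  -- injectivity
  have hinj : InjOn φ (Ioi 0) := by
    have hanti : StrictAntiOn φ (Ioi 0) := by
      apply strictAntiOn_of_deriv_neg (convex_Ioi 0)
      · apply ContinuousOn.sub
        · apply ContinuousOn.div continuousOn_const
            (Continuous.continuousOn (by continuity))
          intro t ht
          have ht0 : (0:ℝ) < t := ht
          have : 0 < Real.sqrt t := Real.sqrt_pos.2 ht0
          positivity
        · exact Continuous.continuousOn (by continuity)
      · intro t ht
        rw [interior_Ioi] at ht
        rw [(hderiv t ht).deriv]
        have ht0 : (0:ℝ) < t := ht
        have hst : 0 < Real.sqrt t := Real.sqrt_pos.2 ht0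
        have : 0 < x / (4 * t * Real.sqrt t) + a / (2 * Real.sqrt t) := by positivity
        simp only [hφ']
        linarith
    exact hanti.injOn
  -- image is univ
  have himg : φ '' Ioi 0 = univ := by
    apply eq_univ_of_forall
    intro v
    set r := Real.sqrt (v ^ 2 + 2 * (x * a)) with hr_def
    have hr2 : r ^ 2 = v ^ 2 + 2 * (x * a) := Real.sq_sqrt (by positivity)
    have hrv : v < r := by
      have h1 : |v| < r := by
        rw [hr_def, ← Real.sqrt_sq_eq_abs]
        apply Real.sqrt_lt_sqrt (sq_nonneg v)
        nlinarith
      calc v ≤ |v| := le_abs_self v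
        _ < r := h1
    set s : ℝ := (r - v) / (2 * a) with hs_def
    have hs0 : 0 < s := by
      apply div_pos (by linarith) (by linarith)
    refine ⟨s ^ 2, mem_Ioi.2 (by positivity), ?_⟩
    have hss : Real.sqrt (s ^ 2) = s := Real.sqrt_sq hs0.le
    simp only [hφ, hss]
    have h2 : 2 * a * s = r - v := by
      rw [hs_def]; field_simp
    have h4 : ((r + v) * s) * (2 * a) = x * (2 * a) := by
      linear_combination (r + v) * h2 + hr2
    have h5 : (r + v) * s = x := mul_right_cancel₀ (by positivity) h4
    have hkey : 2 * a * s ^ 2 + 2 * v * s - x = 0 := by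
      linear_combination s * h2 + h5
    have hdiv : x / (2 * s) = v + a * s := by
      rw [div_eq_iff (by positivity)]
      linear_combination -hkey
    rw [hdiv]; ring
  -- change of variables
  have hcv := integral_image_eq_integral_abs_deriv_smul measurableSet_Ioi hderivWithin hinj G
  rw [himg] at hcv
  -- pointwise identity on Ioi 0
  have hpt : ∀ t ∈ Ioi (0:ℝ), |φ' t| • G (φ t) =
      Real.exp (-(l * t)) * ((x / t) *
        (Real.exp (-(x ^ 2 / (4 * t))) / Real.sqrt (4 * π * t))) := by
    intro t ht
    have ht0 : (0:ℝ) < t := ht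
    set s := Real.sqrt t with hs_def
    have hs0 : 0 < s := Real.sqrt_pos.2 ht0
    have hs2 : s ^ 2 = t := Real.sq_sqrt ht0.le
    set ψ : ℝ := x / (2 * s) + a * s with hψ_def
    have hψ0 : 0 < ψ := by positivity
    have hsqψ : Real.sqrt ((φ t) ^ 2 + 2 * (x * a)) = ψ := by
      have : (φ t) ^ 2 + 2 * (x * a) = ψ ^ 2 := by
        simp only [hφ, ← hs_def, hψ_def]
        field_simp
        ring
      rw [this, Real.sqrt_sq hψ0.le]
    have habs : |φ' t| = x / (4 * t * s) + a / (2 * s) := by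
      simp only [hφ', ← hs_def]
      rw [abs_neg, abs_of_pos (by positivity)]
    have hexp : Real.exp (-(x * a)) * Real.exp (-(φ t) ^ 2) =
        Real.exp (-(l * t)) * Real.exp (-(x ^ 2 / (4 * t))) := by
      rw [← Real.exp_add, ← Real.exp_add]
      congr 1
      have hv2 : (φ t) ^ 2 = x ^ 2 / (4 * t) - x * a + l * t := by
        simp only [hφ, ← hs_def]
        rw [← hs2, ← ha2]
        field_simp
        ring
      rw [hv2]; ring
    have hsqrtpit : Real.sqrt (4 * π * t) = 2 * Real.sqrt π * s := by
      rw [show (4:ℝ) * π * t = (2 * Real.sqrt π * s) ^ 2 by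
        rw [mul_pow, mul_pow, Real.sq_sqrt Real.pi_pos.le, hs2]; ring]
      exact Real.sqrt_sq (by positivity)
    have hπ0 : 0 < Real.sqrt π := Real.sqrt_pos.2 Real.pi_pos
    simp only [hG, smul_eq_mul, hsqψ, habs, hsqrtpit]
    rw [show Real.exp (-(x*a)) * Real.exp (-(φ t)^2) * ((1/Real.sqrt π) * (1 + φ t / ψ)) =
        (Real.exp (-(x*a)) * Real.exp (-(φ t)^2)) * ((1/Real.sqrt π) * (1 + φ t / ψ)) by ring,
      hexp]
    have halg : (x / (4 * t * s) + a / (2 * s)) * ((1 / Real.sqrt π) * (1 + φ t / ψ)) =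
        x / t / (2 * Real.sqrt π * s) := by
      have hφt : φ t = x / (2 * s) - a * s := by simp [hφ, ← hs_def]
      rw [hφt, hψ_def, ← hs2]
      field_simp
      ring
    calc (x / (4*t*s) + a / (2*s)) * (Real.exp (-(l*t)) * Real.exp (-(x^2/(4*t))) *
          ((1/Real.sqrt π) * (1 + φ t / ψ)))
        = (Real.exp (-(l*t)) * Real.exp (-(x^2/(4*t)))) *
          ((x / (4*t*s) + a / (2*s)) * ((1/Real.sqrt π) * (1 + φ t / ψ))) := by ring
      _ = (Real.exp (-(l*t)) * Real.exp (-(x^2/(4*t)))) * (x / t / (2 * Real.sqrt π * s)) := by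
          rw [halg]
      _ = Real.exp (-(l*t)) * (x / t * (Real.exp (-(x^2/(4*t))) / (2 * Real.sqrt π * s))) := by
          ring
  -- compute ∫ G
  have hG_int : ∫ v : ℝ, G v = Real.exp (-(x * a)) := by
    have hsplit : ∀ v : ℝ, G v = (Real.exp (-(x * a)) / Real.sqrt π) *
        (Real.exp (-(1:ℝ) * v ^ 2)) + (Real.exp (-(x * a)) / Real.sqrt π) *
        (Real.exp (-v ^ 2) * (v / Real.sqrt (v ^ 2 + 2 * (x * a)))) := by
      intro v; simp only [hG]; rw [neg_one_mul]; ring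
    simp_rw [hsplit]
    rw [integral_add, integral_const_mul, integral_const_mul, integral_gaussian,
      odd_part_zero _ (by positivity), div_one, mul_zero, add_zero]
    · rw [div_mul_eq_mul_div, mul_div_assoc, div_self (Real.sqrt_pos.2 Real.pi_pos).ne',
        mul_one]
    · exact ((integrable_exp_neg_mul_sq one_pos).const_mul _)
    · exact ((odd_part_integrable _ (by positivity)).const_mul _)
  rw [setIntegral_congr_fun measurableSet_Ioi (fun t ht => (hpt t ht).symm), ← hcv]
  simpa using hG_int
end
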